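/- Let G be a graph that is vertex-minimal subject to: G is planar, subcubic, contains no cycles of length 4 through 8, and G^2 is not 6-choosable. Then no vertex of degree 2 in G lies on a triangle. -/

import Mathlib

open SimpleGraph

variable {V : Type*}

/-- The square of a graph: join two distinct vertices at distance at most 2. -/
def SimpleGraph.square (G : SimpleGraph V) : SimpleGraph V where
  Adj u v := u ≠ v ∧ (G.Adj u v ∨ ∃ w, G.Adj u w ∧ G.Adj w v)
  symm := by
    refine ⟨?_⟩
    rintro u v ⟨hne, h | ⟨w, hw1, hw2⟩⟩
    · exact ⟨hne.symm, Or.inl h.symm⟩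
    · exact ⟨hne.symm, Or.inr ⟨w, hw2.symm, hw1.symm⟩⟩
  loopless := ⟨fun v h => h.1 rfl⟩

/-- `k`-choosability: every list assignment with lists of size at least `k`
admits a proper coloring from the lists. -/
def SimpleGraph.Choosable (G : SimpleGraph V) (k : ℕ) : Prop :=
  ∀ L : V → Finset ℕ, (∀ v, k ≤ (L v).card) →
    ∃ f : V → ℕ, (∀ v, f v ∈ L v) ∧ ∀ u v, G.Adj u v → f u ≠ f v

/-- `H` is a minor of `G`: there are nonempty, pairwise disjoint, connected branch
sets in `G` realizing the adjacencies of `H`. -/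
def SimpleGraph.HasMinor {W : Type*} (G : SimpleGraph V) (H : SimpleGraph W) : Prop :=
  ∃ f : W → Set V,
    (∀ w, (f w).Nonempty) ∧
    (∀ w, (G.induce (f w)).Connected) ∧
    (∀ w₁ w₂, w₁ ≠ w₂ → Disjoint (f w₁) (f w₂)) ∧
    (∀ w₁ w₂, H.Adj w₁ w₂ → ∃ a ∈ f w₁, ∃ b ∈ f w₂, G.Adj a b)

/-- Planarity via Wagner's theorem: no `K₅` minor and no `K₃,₃` minor. -/
def SimpleGraph.Planar (G : SimpleGraph V) : Prop :=
  ¬ G.HasMinor (completeGraph (Fin 5)) ∧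
    ¬ G.HasMinor (completeBipartiteGraph (Fin 3) (Fin 3))

/-- `G` contains no cycles of length 4 through 8. -/
def SimpleGraph.NoCycle4To8 (G : SimpleGraph V) : Prop :=
  ∀ (v : V) (c : G.Walk v v), c.IsCycle → ¬ (4 ≤ c.length ∧ c.length ≤ 8)

/-- Claim 3.1(2): in a vertex-minimal subcubic planar graph with no 4- to 8-cycles whose
square is not 6-choosable (minimality: deleting any nonempty set of vertices yields an
induced subgraph whose square is 6-choosable), no vertex of degree 2 lies on a triangle. -/
theorem min_counterexample_no_two_vertex_on_triangle
    [Fintype V] [DecidableEq V] (G : SimpleGraph V) [DecidableRel G.Adj]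
    (hplanar : G.Planar)
    (hsubcubic : ∀ v, G.degree v ≤ 3)
    (hcycles : G.NoCycle4To8)
    (hnot : ¬ G.square.Choosable 6)
    (hmin : ∀ s : Set V, s ≠ Set.univ → ((G.induce s).square).Choosable 6) :
    ¬ ∃ x y z : V, G.degree x = 2 ∧ G.Adj x y ∧ G.Adj y z ∧ G.Adj z x := by

  rintro ⟨x, y, z, hdx, hxy, hyz, hzx⟩
  have hxz : G.Adj x z := hzx.symm
  have hyz' : y ≠ z := hyz.ne
  -- the neighbor finset of x is exactly {y, z}
  have hNx : G.neighborFinset x = {y, z} := by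
    have hsub : ({y, z} : Finset V) ⊆ G.neighborFinset x := by
      intro v hv
      rcases Finset.mem_insert.mp hv with h | h
      · rw [h, G.mem_neighborFinset]; exact hxy
      · rw [Finset.mem_singleton] at h
        rw [h, G.mem_neighborFinset]; exact hxz
    have hcard : (G.neighborFinset x).card ≤ ({y, z} : Finset V).card := by
      rw [Finset.card_insert_of_notMem (by simp [hyz']), Finset.card_singleton]
      rw [← G.card_neighborFinset_eq_degree] at hdx
      omega
    exact (Finset.eq_of_subset_of_card_le hsub hcard).symm
  -- the "ball" of square-neighbors of x
  set A : Finset V := (G.neighborFinset y ∪ G.neighborFinset z).erase x with hA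
  have hsq : ∀ v, G.square.Adj x v → v ∈ A := by
    rintro v ⟨hne, h | ⟨w, hw1, hw2⟩⟩
    · have hv : v ∈ G.neighborFinset x := (G.mem_neighborFinset x v).mpr h
      rw [hNx] at hv
      rcases Finset.mem_insert.mp hv with h' | h'
      · subst h'
        exact Finset.mem_erase.mpr ⟨hne.symm, Finset.mem_union.mpr
          (Or.inr ((G.mem_neighborFinset z v).mpr hyz.symm))⟩
      · rw [Finset.mem_singleton] at h'; subst h'
        exact Finset.mem_erase.mpr ⟨hne.symm, Finset.mem_union.mpr
          (Or.inl ((G.mem_neighborFinset y v).mpr hyz))⟩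
    · have hw : w ∈ G.neighborFinset x := (G.mem_neighborFinset x w).mpr hw1
      rw [hNx] at hw
      refine Finset.mem_erase.mpr ⟨hne.symm, Finset.mem_union.mpr ?_⟩
      rcases Finset.mem_insert.mp hw with h' | h'
      · subst h'; exact Or.inl ((G.mem_neighborFinset w v).mpr hw2)
      · rw [Finset.mem_singleton] at h'; subst h'
        exact Or.inr ((G.mem_neighborFinset w v).mpr hw2)
  have hAcard : A.card ≤ 5 := by
    have hxm : x ∈ G.neighborFinset y ∪ G.neighborFinset z :=
      Finset.mem_union.mpr (Or.inl ((G.mem_neighborFinset y x).mpr hxy.symm))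
    rw [hA, Finset.card_erase_of_mem hxm]
    have h1 : (G.neighborFinset y ∪ G.neighborFinset z).card ≤ 6 := by
      calc (G.neighborFinset y ∪ G.neighborFinset z).card
          ≤ (G.neighborFinset y).card + (G.neighborFinset z).card :=
            Finset.card_union_le _ _
        _ ≤ 6 := by
            have := hsubcubic y; have := hsubcubic z
            rw [← G.card_neighborFinset_eq_degree] at *
            omega
    omega
  -- set up the contradiction
  apply hnot
  intro L hL
  set s : Set V := {v : V | v ≠ x} with hsdef
  have hxs : x ∉ s := by simp [hsdef]
  have hsne : s ≠ Set.univ := fun h => hxs (h ▸ Set.mem_univ x)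
  obtain ⟨f, hf1, hf2⟩ := hmin s hsne (fun v => L v.1) (fun v => hL v.1)
  set f' : V → ℕ := fun v => if h : v = x then 0 else f ⟨v, h⟩ with hf'
  set T : Finset ℕ := A.image f' with hT
  have hTcard : T.card ≤ 5 := le_trans (Finset.card_image_le) hAcard
  have hnonempty : (L x \ T).Nonempty := by
    rw [← Finset.card_pos]
    have h6 := hL x
    have := Finset.le_card_sdiff T (L x)
    omega
  obtain ⟨c, hc⟩ := hnonempty
  have hcL : c ∈ L x := (Finset.mem_sdiff.mp hc).1
  have hcT : c ∉ T := (Finset.mem_sdiff.mp hc).2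
  refine ⟨fun v => if v = x then c else f' v, ?_, ?_⟩
  · intro v
    by_cases h : v = x
    · subst h; simp [hcL]
    · simp only [if_neg h, hf', dif_neg h]
      exact hf1 ⟨v, h⟩
  · rintro u v huv
    by_cases hu : u = x
    · subst hu
      have hv : v ≠ u := huv.ne.symm
      have hvA : v ∈ A := hsq v huv
      beta_reduce
      rw [if_pos rfl, if_neg hv]
      intro heq
      exact hcT (heq ▸ Finset.mem_image_of_mem f' hvA)
    · by_cases hv : v = x
      · subst hv
        have huA : u ∈ A := hsq u huv.symm
        beta_reduce
        rw [if_pos rfl, if_neg hu]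
        intro heq
        exact hcT (heq ▸ Finset.mem_image_of_mem f' huA)
      · -- both different from x: use the coloring of the induced graph
        simp only [if_neg hu, if_neg hv, hf', dif_neg hu, dif_neg hv]
        apply hf2 ⟨u, hu⟩ ⟨v, hv⟩
        obtain ⟨hne, hadj⟩ := huv
        refine ⟨fun h => hne (congrArg Subtype.val h), ?_⟩
        rcases hadj with h | ⟨w, hw1, hw2⟩
        · exact Or.inl h
        · by_cases hw : w = x
          · rw [hw] at hw1 hw2
            -- u and v are both neighbors of x, hence in {y, z}
            have hu' : u ∈ G.neighborFinset x := (G.mem_neighborFinset _ _).mpr hw1.symm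
            have hv' : v ∈ G.neighborFinset x := (G.mem_neighborFinset _ _).mpr hw2
            rw [hNx] at hu' hv'
            simp only [Finset.mem_insert, Finset.mem_singleton] at hu' hv'
            refine Or.inl ?_
            show G.Adj u v
            rcases hu' with h1 | h1 <;> rcases hv' with h2 | h2 <;>
              rw [h1, h2] <;>
              first
                | exact hyz
                | exact hyz.symm
                | (exfalso; exact hne (h1.trans h2.symm))
          · exact Or.inr ⟨⟨w, hw⟩, hw1, hw2⟩
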